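/- For any rooted ordered tree T with n ≥ 1 nodes, the tree entropy satisfies n·H(T) ≤ 2n, where n·H(T) = -∑_{i≥0} d_i log₂(d_i/n) and d_i is the number of nodes of degree i in T. -/

import Mathlib

/-- Tree entropy is at most `2n`: if `d i` counts nodes of degree `i` in a rooted
ordered tree with `n ≥ 1` nodes (so `∑ d i = n` and `∑ i·d i = n - 1`), then
`-∑ i, d i · log₂ (d i / n) ≤ 2n`. -/
theorem stmt6 (n : ℕ) (hn : 1 ≤ n) (d : ℕ → ℕ)
    (hsum : ∑ i ∈ Finset.range (n + 1), d i = n)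
    (hedges : ∑ i ∈ Finset.range (n + 1), i * d i = n - 1) :
    -∑ i ∈ Finset.range (n + 1), (d i : ℝ) * Real.logb 2 ((d i : ℝ) / (n : ℝ)) ≤
      2 * (n : ℝ) := by
  have hlog2 : (0:ℝ) < Real.log 2 := Real.log_pos (by norm_num)
  have hN : (0:ℝ) < (n:ℝ) := by exact_mod_cast hn
  -- pointwise bound via Gibbs' inequality with q_i = 2^{-(i+1)}
  have key : ∀ i : ℕ, -((d i : ℝ) * Real.logb 2 ((d i : ℝ) / (n : ℝ))) ≤
      (d i : ℝ) * ((i : ℝ) + 1) + ((n : ℝ) * (1/2 : ℝ)^(i+1) - (d i : ℝ)) / Real.log 2 := by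
    intro i
    rcases Nat.eq_zero_or_pos (d i) with h0 | hpos
    · rw [h0]
      simp only [Nat.cast_zero, zero_mul, neg_zero, sub_zero, zero_add]
      positivity
    · have ha : (0:ℝ) < (d i : ℝ) := by exact_mod_cast hpos
      have hy : (0:ℝ) < (n : ℝ) * (1/2 : ℝ)^(i+1) / (d i : ℝ) := by positivity
      have hsplit : Real.logb 2 ((n:ℝ) / (d i : ℝ)) =
          Real.logb 2 ((n : ℝ) * (1/2 : ℝ)^(i+1) / (d i : ℝ)) + ((i:ℝ) + 1) := by
        have h : (n:ℝ) / (d i : ℝ) =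
            ((n : ℝ) * (1/2 : ℝ)^(i+1) / (d i : ℝ)) * (2:ℝ)^(i+1) := by
          field_simp
          ring_nf; simp only [← mul_pow]; norm_num
        have h22 : Real.logb 2 2 = 1 := by simp
        rw [h, Real.logb_mul (by positivity) (by positivity), Real.logb_pow, h22]
        push_cast; ring
      have hlogle : Real.logb 2 ((n : ℝ) * (1/2 : ℝ)^(i+1) / (d i : ℝ)) ≤
          ((n : ℝ) * (1/2 : ℝ)^(i+1) / (d i : ℝ) - 1) / Real.log 2 := by
        rw [Real.logb]
        gcongr
        exact Real.log_le_sub_one_of_pos hy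
      have hneg : -((d i : ℝ) * Real.logb 2 ((d i : ℝ) / (n : ℝ))) =
          (d i : ℝ) * Real.logb 2 ((n:ℝ) / (d i : ℝ)) := by
        rw [← mul_neg, ← Real.logb_inv, inv_div]
      rw [hneg, hsplit, mul_add]
      have h2 := mul_le_mul_of_nonneg_left hlogle ha.le
      have h3 : (d i : ℝ) * (((n : ℝ) * (1/2 : ℝ)^(i+1) / (d i : ℝ) - 1) / Real.log 2)
          = ((n : ℝ) * (1/2 : ℝ)^(i+1) - (d i : ℝ)) / Real.log 2 := by
        field_simp
      linarith
  have h := Finset.sum_le_sum (fun i (_ : i ∈ Finset.range (n+1)) => key i)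
  rw [Finset.sum_neg_distrib, Finset.sum_add_distrib] at h
  -- first sum equals (n-1) + n = 2n - 1
  have hA : ∑ i ∈ Finset.range (n+1), (d i : ℝ) * ((i:ℝ) + 1) = ((n:ℝ) - 1) + n := by
    have e : ∑ i ∈ Finset.range (n+1), (d i : ℝ) * ((i:ℝ) + 1)
        = ((∑ i ∈ Finset.range (n+1), (i * d i + d i) : ℕ) : ℝ) := by
      push_cast
      refine Finset.sum_congr rfl fun i _ => by ring
    rw [e, Finset.sum_add_distrib, hedges, hsum, Nat.cast_add, Nat.cast_sub hn]
    push_cast; ring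
  -- second sum is nonpositive
  have hgeom : ∑ i ∈ Finset.range (n+1), ((1/2:ℝ))^(i+1) ≤ 1 := by
    have e : ∑ i ∈ Finset.range (n+1), ((1/2:ℝ))^(i+1)
        = (1/2:ℝ) * ∑ i ∈ Finset.range (n+1), ((1/2:ℝ))^i := by
      rw [Finset.mul_sum]
      refine Finset.sum_congr rfl fun i _ => by ring
    have hg := geom_sum_eq (by norm_num : (1/2:ℝ) ≠ 1) (n+1)
    have hg2 : ((1/2:ℝ)^(n+1) - 1) / (1/2 - 1) = 2 * (1 - (1/2:ℝ)^(n+1)) := by ring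
    rw [e, hg, hg2]
    have hp : (0:ℝ) < (1/2:ℝ)^(n+1) := by positivity
    nlinarith
  have hd : (∑ i ∈ Finset.range (n+1), (d i : ℝ)) = (n:ℝ) := by exact_mod_cast hsum
  have hB : ∑ i ∈ Finset.range (n+1), ((n:ℝ) * (1/2:ℝ)^(i+1) - (d i : ℝ)) / Real.log 2 ≤ 0 := by
    rw [← Finset.sum_div]
    apply div_nonpos_of_nonpos_of_nonneg _ hlog2.le
    rw [Finset.sum_sub_distrib, ← Finset.mul_sum, hd]
    nlinarith
  rw [hA] at h
  linarith
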